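/- Define R(x,t) = (cosh t · cosh x + 1)/(sinh(−t)·(cosh x + cosh t)) for x ∈ ℝ, t < 0. Then: (i) ∂R/∂x(x,t) = sinh x · sinh(−t)/(cosh x + cosh t)², so for each fixed t < 0 the function x ↦ R(x,t) is even and strictly increasing on [0,∞); (ii) lim_{x→∞} R(x,t) = coth(−t), so sup_{x∈ℝ} R(x,t) = coth(−t); and (iii) for each fixed x ∈ ℝ, lim_{t→0⁻} R(x,t)·tanh(−t) = 1. -/

import Mathlib

open Filter Set

private lemma rosenau_deriv (t : ℝ) (ht : t < 0) (x : ℝ) :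
    HasDerivAt (fun y => (Real.cosh t * Real.cosh y + 1)
      / (Real.sinh (-t) * (Real.cosh y + Real.cosh t)))
      (Real.sinh x * Real.sinh (-t) / (Real.cosh x + Real.cosh t) ^ 2) x := by
  have hs : 0 < Real.sinh (-t) := Real.sinh_pos_iff.2 (by linarith)
  have hc : 0 < Real.cosh x + Real.cosh t := by positivity
  have hnum : HasDerivAt (fun y => Real.cosh t * Real.cosh y + 1)
      (Real.cosh t * Real.sinh x) x :=
    ((Real.hasDerivAt_cosh x).const_mul _).add_const 1
  have hden : HasDerivAt (fun y => Real.sinh (-t) * (Real.cosh y + Real.cosh t))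
      (Real.sinh (-t) * Real.sinh x) x :=
    ((Real.hasDerivAt_cosh x).add_const _).const_mul _
  have hden0 : Real.sinh (-t) * (Real.cosh x + Real.cosh t) ≠ 0 := by positivity
  have := hnum.div hden hden0
  refine this.congr_deriv (Eq.symm ?_)
  have hsq : Real.sinh (-t) * Real.sinh (-t) = Real.cosh t ^ 2 - 1 := by
    have := Real.cosh_sq (-t)
    rw [Real.cosh_neg] at this; nlinarith [this]
  set s := Real.sinh (-t) with hsdef
  have hs0 : s ≠ 0 := ne_of_gt hs
  have hc0 : Real.cosh x + Real.cosh t ≠ 0 := ne_of_gt hc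
  field_simp
  linear_combination (Real.sinh x) * hsq

theorem rosenau_curvature_properties (R : ℝ → ℝ → ℝ)
    (hR : ∀ x t : ℝ, R x t = (Real.cosh t * Real.cosh x + 1)
      / (Real.sinh (-t) * (Real.cosh x + Real.cosh t))) :
    ∀ t : ℝ, t < 0 →
      (∀ x : ℝ, HasDerivAt (fun y => R y t)
        (Real.sinh x * Real.sinh (-t) / (Real.cosh x + Real.cosh t) ^ 2) x) ∧
      (∀ x : ℝ, R (-x) t = R x t) ∧
      StrictMonoOn (fun x => R x t) (Set.Ici 0) ∧
      Tendsto (fun x => R x t) atTop (nhds (Real.cosh (-t) / Real.sinh (-t))) ∧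
      (⨆ x : ℝ, R x t) = Real.cosh (-t) / Real.sinh (-t) ∧
      (∀ x : ℝ, Tendsto (fun s => R x s * Real.tanh (-s))
        (nhdsWithin 0 (Set.Iio 0)) (nhds 1)) := by
  intro t ht
  have hs : 0 < Real.sinh (-t) := Real.sinh_pos_iff.2 (by linarith)
  have hfun : (fun y => R y t) = fun y => (Real.cosh t * Real.cosh y + 1)
      / (Real.sinh (-t) * (Real.cosh y + Real.cosh t)) := by
    funext y; exact hR y t
  have hderiv : ∀ x : ℝ, HasDerivAt (fun y => R y t)
      (Real.sinh x * Real.sinh (-t) / (Real.cosh x + Real.cosh t) ^ 2) x := by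
    intro x; rw [hfun]; exact rosenau_deriv t ht x
  -- key algebraic rewrite: R x t = cosh(-t)/sinh(-t) - sinh(-t)/(cosh x + cosh t)
  have hkey : ∀ x : ℝ, R x t = Real.cosh (-t) / Real.sinh (-t)
      - Real.sinh (-t) / (Real.cosh x + Real.cosh t) := by
    intro x
    have hc : 0 < Real.cosh x + Real.cosh t := by positivity
    have hsq : Real.sinh (-t) * Real.sinh (-t) = Real.cosh t ^ 2 - 1 := by
      have := Real.cosh_sq (-t)
      rw [Real.cosh_neg] at this; nlinarith [this]
    rw [hR, Real.cosh_neg]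
    set s := Real.sinh (-t) with hsdef
    have hs0 : s ≠ 0 := ne_of_gt hs
    have hc0 : Real.cosh x + Real.cosh t ≠ 0 := ne_of_gt hc
    field_simp
    nlinarith [hsq]
  refine ⟨hderiv, ?_, ?_, ?_, ?_, ?_⟩
  · intro x; rw [hR, hR, Real.cosh_neg]
  · -- strict mono
    refine StrictMonoOn.mono ?_ (le_refl _)
    apply strictMonoOn_of_deriv_pos (convex_Ici 0)
    · exact fun x _ => ((hderiv x).differentiableAt.continuousAt).continuousWithinAt
    · intro x hx
      rw [interior_Ici] at hx
      rw [(hderiv x).deriv]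
      have hx' : 0 < Real.sinh x := Real.sinh_pos_iff.2 hx
      have hc : 0 < Real.cosh x + Real.cosh t := by positivity
      positivity
  · -- tendsto atTop
    have hcosh_top : Tendsto Real.cosh atTop atTop := by
      apply tendsto_atTop_mono (fun y => ?_) (Real.tendsto_exp_atTop.atTop_div_const (by norm_num : (0:ℝ) < 2))
      rw [Real.cosh_eq]
      have := Real.exp_pos (-y)
      linarith
    have h1 : Tendsto (fun x => Real.cosh x + Real.cosh t) atTop atTop :=
      tendsto_atTop_add_const_right _ _ hcosh_top
    have h2 : Tendsto (fun x => Real.sinh (-t) / (Real.cosh x + Real.cosh t))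
        atTop (nhds 0) := Tendsto.div_atTop tendsto_const_nhds h1
    have := (tendsto_const_nhds (x := Real.cosh (-t) / Real.sinh (-t))
      (f := atTop (α := ℝ))).sub h2
    rw [sub_zero] at this
    exact this.congr fun x => (hkey x).symm
  · -- iSup
    have hcosh_top : Tendsto Real.cosh atTop atTop := by
      apply tendsto_atTop_mono (fun y => ?_) (Real.tendsto_exp_atTop.atTop_div_const (by norm_num : (0:ℝ) < 2))
      rw [Real.cosh_eq]
      have := Real.exp_pos (-y)
      linarith
    have h1 : Tendsto (fun x => Real.cosh x + Real.cosh t) atTop atTop :=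
      tendsto_atTop_add_const_right _ _ hcosh_top
    have h2 : Tendsto (fun x => Real.sinh (-t) / (Real.cosh x + Real.cosh t))
        atTop (nhds 0) := Tendsto.div_atTop tendsto_const_nhds h1
    have htend : Tendsto (fun x => R x t) atTop
        (nhds (Real.cosh (-t) / Real.sinh (-t))) := by
      have := (tendsto_const_nhds (x := Real.cosh (-t) / Real.sinh (-t))
        (f := atTop (α := ℝ))).sub h2
      rw [sub_zero] at this
      exact this.congr fun x => (hkey x).symm
    apply IsLUB.ciSup_eq
    constructor
    · rintro _ ⟨x, rfl⟩
      show R x t ≤ _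
      rw [hkey x]
      have hc : 0 < Real.cosh x + Real.cosh t := by positivity
      have : 0 < Real.sinh (-t) / (Real.cosh x + Real.cosh t) := by positivity
      linarith
    · intro b hb
      exact le_of_tendsto htend (Eventually.of_forall fun x => hb ⟨x, rfl⟩)
  · -- t → 0⁻
    intro x
    have heq : ∀ᶠ s in nhdsWithin (0:ℝ) (Set.Iio 0),
        R x s * Real.tanh (-s) = (Real.cosh s * Real.cosh x + 1)
          / ((Real.cosh x + Real.cosh s) * Real.cosh (-s)) := by
      filter_upwards [self_mem_nhdsWithin] with s hs
      have hs' : 0 < Real.sinh (-s) := Real.sinh_pos_iff.2 (by simpa using hs)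
      have hc : 0 < Real.cosh x + Real.cosh s := by positivity
      have hch : Real.cosh s ≠ 0 := ne_of_gt (Real.cosh_pos s)
      have hsh : Real.sinh s ≠ 0 := by
        have : Real.sinh s < 0 := by
          have := Real.sinh_pos_iff.2 (show (0:ℝ) < -s by simpa using hs)
          rw [Real.sinh_neg] at this; linarith
        exact ne_of_lt this
      rw [hR, Real.tanh_eq_sinh_div_cosh, Real.sinh_neg, Real.cosh_neg]
      field_simp
    rw [Filter.tendsto_congr' heq]
    have hpos : (0:ℝ) < Real.cosh x + 1 := by positivity
    have hcont : ContinuousAt (fun s => (Real.cosh s * Real.cosh x + 1)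
        / ((Real.cosh x + Real.cosh s) * Real.cosh (-s))) 0 := by
      apply ContinuousAt.div
      · fun_prop
      · fun_prop
      · simp [Real.cosh_zero]
        positivity
    have h : Tendsto (fun s => (Real.cosh s * Real.cosh x + 1)
        / ((Real.cosh x + Real.cosh s) * Real.cosh (-s))) (nhdsWithin 0 (Set.Iio 0))
        (nhds ((Real.cosh 0 * Real.cosh x + 1)
          / ((Real.cosh x + Real.cosh 0) * Real.cosh (-0)))) :=
      hcont.tendsto.mono_left nhdsWithin_le_nhds
    simp only [Real.cosh_zero, neg_zero, one_mul, mul_one] at h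
    rwa [div_self (ne_of_gt hpos)] at h
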